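/- Let n ≥ 2 and let r, s be integers with 1 ≤ r, s ≤ n and s ≤ r+1. Then P_n(r,s), the convex hull of the set of matrices π in T_n with π_{rs} = 0, is a face of P_n; that is, P_n(r,s) is an extreme subset of P_n: whenever a point of P_n(r,s) lies in the open segment between two points of P_n, both endpoints lie in P_n(r,s). -/

import Mathlib

/-- `T n` is the set of `n × n` permutation matrices `π` (with real entries)
such that `π i j = 0` whenever `j ≥ i + 2` (`0`-based indices). -/
def T (n : ℕ) : Set (Matrix (Fin n) (Fin n) ℝ) :=
  {M | ∃ σ : Equiv.Perm (Fin n),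
    (∀ i : Fin n, (σ i : ℕ) ≤ (i : ℕ) + 1) ∧
    M = Matrix.of fun i j => if σ i = j then (1 : ℝ) else 0}

/-- `P n` is the convex hull of `T n`. -/
def P (n : ℕ) : Set (Matrix (Fin n) (Fin n) ℝ) := convexHull ℝ (T n)

/-- `Pface n r s` is the convex hull of the matrices in `T n` whose `(r, s)`
entry is `0`. -/
def Pface (n : ℕ) (r s : Fin n) : Set (Matrix (Fin n) (Fin n) ℝ) :=
  convexHull ℝ {M ∈ T n | M r s = 0}

lemma T_nonneg {n : ℕ} {M : Matrix (Fin n) (Fin n) ℝ} (h : M ∈ T n) (i j : Fin n) :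
    0 ≤ M i j := by
  obtain ⟨σ, -, rfl⟩ := h
  simp only [Matrix.of_apply]
  split <;> norm_num

/-- evaluation at (r,s) as a linear map -/
def evalrs (n : ℕ) (r s : Fin n) : Matrix (Fin n) (Fin n) ℝ →ₗ[ℝ] ℝ where
  toFun M := M r s
  map_add' _ _ := rfl
  map_smul' _ _ := rfl

lemma P_nonneg {n : ℕ} {x : Matrix (Fin n) (Fin n) ℝ} (h : x ∈ P n) (r s : Fin n) :
    0 ≤ x r s := by
  have hc : Convex ℝ {M : Matrix (Fin n) (Fin n) ℝ | 0 ≤ evalrs n r s M} :=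
    convex_halfSpace_ge (evalrs n r s).isLinear 0
  exact convexHull_min (fun M hM => show 0 ≤ evalrs n r s M from T_nonneg hM r s) hc h

lemma mem_Pface_of {n : ℕ} {x : Matrix (Fin n) (Fin n) ℝ} {r s : Fin n}
    (hx : x ∈ P n) (h0 : x r s = 0) : x ∈ Pface n r s := by
  classical
  rw [P, convexHull_eq] at hx
  obtain ⟨ι, t, w, z, hw, hw1, hz, hcm⟩ := hx
  have hx' : ∑ i ∈ t, w i • z i = x := by
    rw [← hcm, Finset.centerMass, hw1]; simp
  have hterm : ∀ i ∈ t, w i * z i r s = 0 := by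
    rw [← hx'] at h0
    refine (Finset.sum_eq_zero_iff_of_nonneg ?_).1 ?_
    · exact fun i hi => mul_nonneg (hw i hi) (T_nonneg (hz i hi) r s)
    · simpa [Matrix.sum_apply] using h0
  rw [Pface, convexHull_eq]
  refine ⟨ι, t.filter (fun i => w i ≠ 0), w, z, fun i hi => hw i (Finset.mem_filter.1 hi).1,
    ?_, ?_, ?_⟩
  · rw [Finset.sum_filter_ne_zero]; exact hw1
  · intro i hi
    obtain ⟨hit, hwi⟩ := Finset.mem_filter.1 hi
    refine ⟨hz i hit, ?_⟩
    have := hterm i hit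
    rcases mul_eq_zero.1 this with h | h
    · exact absurd h hwi
    · exact h
  · rw [Finset.centerMass, Finset.sum_filter_ne_zero, hw1]
    simp only [inv_one, one_smul]
    rw [← hx']
    apply Finset.sum_subset (Finset.filter_subset _ _)
    intro i hi hni
    have hwi : w i = 0 := by
      by_contra hc
      exact hni (Finset.mem_filter.2 ⟨hi, hc⟩)
    simp [hwi]

lemma Pface_eq_zero {n : ℕ} {x : Matrix (Fin n) (Fin n) ℝ} {r s : Fin n}
    (hx : x ∈ Pface n r s) : x r s = 0 := by
  have hc : Convex ℝ {M : Matrix (Fin n) (Fin n) ℝ | evalrs n r s M = 0} :=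
    convex_hyperplane (evalrs n r s).isLinear 0
  exact convexHull_min (fun M hM => show evalrs n r s M = 0 from hM.2) hc hx

/-- For `n ≥ 2` and `1 ≤ r, s ≤ n` with `s ≤ r + 1` (in `1`-based indexing,
which in `0`-based `Fin n` indexing is again `s ≤ r + 1`), the set
`P n (r, s)` is a face of `P n`, i.e. an extreme subset of `P n`. -/
theorem Pface_isExtreme (n : ℕ) (hn : 2 ≤ n) (r s : Fin n)
    (hrs : (s : ℕ) ≤ (r : ℕ) + 1) :
    IsExtreme ℝ (P n) (Pface n r s) := by
  constructor
  · exact convexHull_mono (fun M hM => hM.1)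
  · intro x1 hx1 x2 hx2 x hx hseg
    have hxP : x ∈ P n := convexHull_mono (fun M hM => hM.1) hx
    obtain ⟨a, b, ha, hb, hab, hsum⟩ := hseg
    have h0 : x r s = 0 := Pface_eq_zero hx
    have hsum' : a * x1 r s + b * x2 r s = 0 := by
      have := congrFun (congrFun hsum r) s
      simpa [Matrix.add_apply, Matrix.smul_apply, h0] using this
    have h1 : 0 ≤ x1 r s := P_nonneg hx1 r s
    have h2 : 0 ≤ x2 r s := P_nonneg hx2 r s
    have hz1 : x1 r s = 0 := by nlinarith
    have hz2 : x2 r s = 0 := by nlinarith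
    exact mem_Pface_of hx1 hz1
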